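/- Let E be a finite set (of 'l-edges'), let V be a finite set (of 'vertices'), let vert : E → Finset V assign to each edge its vertex set, and let N : E → ℕ. Suppose that for every nonempty subset S ⊆ E there exists e ∈ S such that the number of vertices of e not lying on any other edge of S, i.e. |vert(e) \ ⋃_{f ∈ S, f ≠ e} vert(f)|, is at least N(e). Then there exists an enumeration e₁, …, e_n of E such that for every j, |vert(e_j) \ ⋃_{k < j} vert(e_k)| ≥ N(e_j). -/

import Mathlib

lemma exists_good_list {E V : Type*} [DecidableEq E] [DecidableEq V]
    (vert : E → Finset V) (N : E → ℕ)
    (h : ∀ S : Finset E, S.Nonempty →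
      ∃ e ∈ S, N e ≤ (vert e \ (S.erase e).biUnion vert).card) :
    ∀ S : Finset E, ∃ l : List E, l.Nodup ∧ l.toFinset = S ∧
      ∀ i (hi : i < l.length),
        N l[i] ≤ (vert l[i] \ ((l.take i).toFinset.biUnion vert)).card := by
  intro S
  induction S using Finset.strongInduction with
  | _ S ih =>
    rcases S.eq_empty_or_nonempty with rfl | hS
    · exact ⟨[], by simp⟩
    · obtain ⟨e, heS, he⟩ := h S hS
      obtain ⟨l, hnd, htf, hl⟩ := ih (S.erase e) (Finset.erase_ssubset heS)
      refine ⟨l ++ [e], ?_, ?_, ?_⟩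
      · simp only [List.nodup_append, List.nodup_cons, List.nodup_nil]
        refine ⟨hnd, by simp, ?_⟩
        intro a ha
        simp only [List.mem_singleton]
        intro b hb
        rw [hb]
        have : a ∈ S.erase e := htf ▸ List.mem_toFinset.mpr ha
        exact Finset.ne_of_mem_erase this
      · simp only [List.toFinset_append, List.toFinset_cons, List.toFinset_nil, htf]
        rw [Finset.union_comm, Finset.insert_union, Finset.empty_union, Finset.insert_erase heS]
      · intro i hi
        simp only [List.length_append, List.length_singleton] at hi
        rcases lt_or_ge i l.length with hlt | hge
        · have h1 : (l ++ [e])[i] = l[i] := List.getElem_append_left hlt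
          have h2 : (l ++ [e]).take i = l.take i := List.take_append_of_le_length hlt.le
          rw [h1, h2]
          exact hl i hlt
        · have hi' : i = l.length := by omega
          subst hi'
          have h1 : (l ++ [e])[l.length] = e := by simp
          have h2 : (l ++ [e]).take l.length = l := by simp
          rw [h1, h2, htf]
          exact he

theorem diagonalizable_of_subset_condition {E V : Type*}
    [Fintype E] [DecidableEq E] [DecidableEq V]
    (vert : E → Finset V) (N : E → ℕ)
    (h : ∀ S : Finset E, S.Nonempty →
      ∃ e ∈ S, N e ≤ (vert e \ (S.erase e).biUnion vert).card) :
    ∃ σ : Fin (Fintype.card E) ≃ E,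
      ∀ j : Fin (Fintype.card E),
        N (σ j) ≤
          (vert (σ j) \
            (Finset.univ.filter (fun k : Fin (Fintype.card E) => k < j)).biUnion
              (fun k => vert (σ k))).card := by
  obtain ⟨l, hnd, htf, hl⟩ := exists_good_list vert N h Finset.univ
  have hmem : ∀ a : E, a ∈ l := fun a => List.mem_toFinset.mp (htf ▸ Finset.mem_univ a)
  have hlen : Fintype.card E = l.length := by
    rw [← List.toFinset_card_of_nodup hnd, htf, Finset.card_univ]
  let τ : Fin l.length ≃ E := hnd.getEquivOfForallMemList l hmem
  refine ⟨(finCongr hlen).trans τ, ?_⟩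
  intro j
  have hτ : ∀ k : Fin (Fintype.card E), ((finCongr hlen).trans τ) k = l[(k : ℕ)] := by
    intro k
    rfl
  rw [hτ j]
  have hkey : (Finset.univ.filter (fun k : Fin (Fintype.card E) => k < j)).biUnion
      (fun k => vert (((finCongr hlen).trans τ) k)) = (l.take j).toFinset.biUnion vert := by
    ext v
    simp only [Finset.mem_biUnion, Finset.mem_filter, Finset.mem_univ, true_and,
      List.mem_toFinset]
    constructor
    · rintro ⟨k, hk, hv⟩
      rw [hτ k] at hv
      refine ⟨l[(k : ℕ)], ?_, hv⟩
      apply List.mem_take_iff_getElem.mpr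
      exact ⟨k, by omega, rfl⟩
    · rintro ⟨a, ha, hv⟩
      obtain ⟨i, hi, rfl⟩ := List.mem_take_iff_getElem.mp ha
      have hi' : i < Fintype.card E := by omega
      have hij : i < (j : ℕ) := lt_of_lt_of_le hi (min_le_left _ _)
      refine ⟨⟨i, hi'⟩, ?_, ?_⟩
      · exact Fin.lt_def.mpr hij
      · rw [hτ]; exact hv
  rw [hkey]
  exact hl j (by omega)
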